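/- For γ > 0 and λ > 1 + √γ, setting ρ = λ(1 + γ/(λ−1)), a = (1−√γ)², b = (1+√γ)², one has ∫_a^b x·√((b−x)(x−a))/(2πγx·(ρ−x)²) dx = 1/((λ−1)² − γ). Equivalently, ∫ x/(ρ−x)² dF_γ(x) = 1/((λ−1)² − γ), where F_γ is the Marčenko–Pastur distribution with parameter γ ≤ 1. -/

import Mathlib

open MeasureTheory intervalIntegral

private lemma sqrt_tendsto_atTop' : Filter.Tendsto Real.sqrt Filter.atTop Filter.atTop := by
  apply Filter.tendsto_atTop_atTop.2
  intro C
  refine ⟨C ^ 2, fun y hy => ?_⟩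
  rcases le_or_gt C 0 with h | h
  · exact h.trans (Real.sqrt_nonneg y)
  · calc C = Real.sqrt (C ^ 2) := (Real.sqrt_sq h.le).symm
      _ ≤ Real.sqrt y := Real.sqrt_le_sqrt hy

private lemma ftc_key (a b ρ K κ : ℝ) (ha0 : 0 ≤ a) (hab : a < b) (hbρ : b < ρ)
    (hκ : 0 < κ) (hκ2 : κ ^ 2 * (ρ - a) = ρ - b)
    (hK : K * (κ * (ρ - a)) = 2 * ρ - a - b) :
    ∫ x in a..b, Real.sqrt ((b - x) * (x - a)) / (ρ - x) ^ 2
      = K * (Real.pi / 2) - Real.pi := by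
  have hba : 0 < b - a := by linarith
  have hρa : 0 < ρ - a := by linarith
  have hρb : 0 < ρ - b := by linarith
  have hderiv : ∀ x ∈ Set.Ioo a b,
      HasDerivAt (fun x =>
        Real.sqrt ((b - x) * (x - a)) / (ρ - x)
          - 2 * Real.arctan (Real.sqrt ((x - a) / (b - x)))
          + K * Real.arctan (κ * Real.sqrt ((x - a) / (b - x))))
        (Real.sqrt ((b - x) * (x - a)) / (ρ - x) ^ 2) x := by
    intro x hx
    obtain ⟨hax, hxb⟩ := hx
    have hA : 0 < x - a := by linarith
    have hB : 0 < b - x := by linarith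
    have hR : 0 < ρ - x := by linarith
    set A := Real.sqrt (x - a) with hAdef
    set B := Real.sqrt (b - x) with hBdef
    have hApos : 0 < A := Real.sqrt_pos.2 hA
    have hBpos : 0 < B := Real.sqrt_pos.2 hB
    have hA2 : A ^ 2 = x - a := Real.sq_sqrt hA.le
    have hB2 : B ^ 2 = b - x := Real.sq_sqrt hB.le
    have hax' : x - a = A ^ 2 := hA2.symm
    have hbx' : b - x = B ^ 2 := hB2.symm
    have hsab : Real.sqrt ((b - x) * (x - a)) = B * A := Real.sqrt_mul hB.le _
    have hsq : Real.sqrt ((x - a) / (b - x)) = A / B := Real.sqrt_div hA.le _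
    have hqpos : 0 < (x - a) / (b - x) := div_pos hA hB
    have hκ2x : κ ^ 2 * ((ρ - x) + A ^ 2) = (ρ - x) - B ^ 2 := by
      linear_combination hκ2 + κ ^ 2 * hA2 + hB2
    have hKx : K * (κ * ((ρ - x) + A ^ 2)) = 2 * (ρ - x) + A ^ 2 - B ^ 2 := by
      linear_combination hK + K * κ * hA2 - hA2 + hB2
    -- components
    have h1 : HasDerivAt (fun y : ℝ => (b - y) * (y - a))
        (-1 * (x - a) + (b - x) * 1) x :=
      ((hasDerivAt_id x).const_sub b).mul ((hasDerivAt_id x).sub_const a)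
    have hgne : (b - x) * (x - a) ≠ 0 := by positivity
    have h2 := (Real.hasDerivAt_sqrt hgne).comp x h1
    have h3 : HasDerivAt (fun y : ℝ => ρ - y) (-1) x := (hasDerivAt_id x).const_sub ρ
    have h4 := h2.div h3 hR.ne'
    have h4' : HasDerivAt (fun y : ℝ => Real.sqrt ((b - y) * (y - a)) / (ρ - y))
        ((B ^ 2 - A ^ 2) / (2 * (A * B) * (ρ - x)) + B * A / (ρ - x) ^ 2) x := by
      refine h4.congr_deriv (Eq.symm ?_)
      simp only [Function.comp_def]
      rw [hsab, hax', hbx']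
      field_simp
      ring
    have h5 : HasDerivAt (fun y : ℝ => (y - a) / (b - y))
        ((1 * (b - x) - (x - a) * -1) / (b - x) ^ 2) x :=
      ((hasDerivAt_id x).sub_const a).div ((hasDerivAt_id x).const_sub b) hB.ne'
    have h6 := (Real.hasDerivAt_sqrt hqpos.ne').comp x h5
    have h7 := (Real.hasDerivAt_arctan (Real.sqrt ((x - a) / (b - x)))).comp x h6
    have h7' : HasDerivAt (fun y : ℝ => Real.arctan (Real.sqrt ((y - a) / (b - y))))
        (1 / (2 * (A * B))) x := by
      refine h7.congr_deriv (Eq.symm ?_)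
      rw [hsq, hax', hbx']
      have hBA : (0:ℝ) < B ^ 2 + A ^ 2 := by positivity
      field_simp
      ring
    have h8 := h6.const_mul κ
    have h9 := (Real.hasDerivAt_arctan (κ * Real.sqrt ((x - a) / (b - x)))).comp x h8
    have h9' : HasDerivAt (fun y : ℝ => Real.arctan (κ * Real.sqrt ((y - a) / (b - y))))
        (κ * ((ρ - x) + A ^ 2) / (2 * (A * B) * (ρ - x))) x := by
      refine h9.congr_deriv (Eq.symm ?_)
      rw [hsq, hax', hbx']
      have hκBA : (0:ℝ) < B ^ 2 + κ ^ 2 * A ^ 2 := by positivity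
      field_simp
      linear_combination (A ^ 2) * hκ2x
    have hD := (h4'.sub (h7'.const_mul 2)).add (h9'.const_mul K)
    refine hD.congr_deriv (Eq.symm ?_)
    rw [hsab]
    rw [show K * (κ * (ρ - x + A ^ 2) / (2 * (A * B) * (ρ - x)))
          = (2 * (ρ - x) + A ^ 2 - B ^ 2) / (2 * (A * B) * (ρ - x)) by
        rw [← mul_div_assoc, ← mul_assoc, mul_assoc K κ _, hKx]]
    field_simp
    ring
  -- integrability
  have hint : IntervalIntegrable
      (fun x => Real.sqrt ((b - x) * (x - a)) / (ρ - x) ^ 2) volume a b := by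
    apply ContinuousOn.intervalIntegrable
    apply ContinuousOn.div
    · exact (Real.continuous_sqrt.comp (by continuity)).continuousOn
    · fun_prop
    · intro y hy
      rw [Set.uIcc_of_le hab.le] at hy
      have h0 : ρ - y ≠ 0 := sub_ne_zero.2 (lt_of_le_of_lt hy.2 hbρ).ne'
      positivity
  -- limit at a
  have hta : Filter.Tendsto (fun x =>
        Real.sqrt ((b - x) * (x - a)) / (ρ - x)
          - 2 * Real.arctan (Real.sqrt ((x - a) / (b - x)))
          + K * Real.arctan (κ * Real.sqrt ((x - a) / (b - x))))
      (nhdsWithin a (Set.Ioi a)) (nhds 0) := by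
    have hca : ContinuousAt (fun x : ℝ =>
        Real.sqrt ((b - x) * (x - a)) / (ρ - x)
          - 2 * Real.arctan (Real.sqrt ((x - a) / (b - x)))
          + K * Real.arctan (κ * Real.sqrt ((x - a) / (b - x)))) a := by
      have c1 : ContinuousAt (fun x : ℝ => Real.sqrt ((b - x) * (x - a)) / (ρ - x)) a :=
        ContinuousAt.div (Real.continuous_sqrt.continuousAt.comp (by fun_prop))
          (by fun_prop) hρa.ne'
      have cq : ContinuousAt (fun x : ℝ => Real.sqrt ((x - a) / (b - x))) a :=
        Real.continuous_sqrt.continuousAt.comp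
          (ContinuousAt.div (by fun_prop) (by fun_prop) (by simpa using hba.ne'))
      exact (c1.sub ((Real.continuous_arctan.continuousAt.comp cq).const_mul 2)).add
        (((Real.continuous_arctan.continuousAt.comp (cq.const_mul κ))).const_mul K)
    have h2 : Filter.Tendsto _ (nhdsWithin a (Set.Ioi a)) (nhds ((fun x : ℝ =>
        Real.sqrt ((b - x) * (x - a)) / (ρ - x)
          - 2 * Real.arctan (Real.sqrt ((x - a) / (b - x)))
          + K * Real.arctan (κ * Real.sqrt ((x - a) / (b - x)))) a)) :=
      hca.continuousWithinAt (s := Set.Ioi a)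
    simpa using h2
  -- limit at b
  have hqT : Filter.Tendsto (fun x : ℝ => (x - a) / (b - x))
      (nhdsWithin b (Set.Iio b)) Filter.atTop := by
    have h1 : Filter.Tendsto (fun x : ℝ => b - x) (nhdsWithin b (Set.Iio b))
        (nhdsWithin 0 (Set.Ioi 0)) := by
      apply tendsto_nhdsWithin_of_tendsto_nhds_of_eventually_within
      · have : ContinuousAt (fun x : ℝ => b - x) b := by fun_prop
        simpa using this.tendsto.mono_left nhdsWithin_le_nhds
      · filter_upwards [self_mem_nhdsWithin] with y hy
        simp only [Set.mem_Iio] at hy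
        exact Set.mem_Ioi.2 (by linarith)
    have h2 := h1.inv_tendsto_nhdsGT_zero
    have h3 : Filter.Tendsto (fun x : ℝ => x - a) (nhdsWithin b (Set.Iio b))
        (nhds (b - a)) := by
      have : ContinuousAt (fun x : ℝ => x - a) b := by fun_prop
      exact this.tendsto.mono_left nhdsWithin_le_nhds
    exact (Filter.Tendsto.pos_mul_atTop hba h3 h2).congr (fun y => (div_eq_mul_inv _ _).symm)
  have htT := sqrt_tendsto_atTop'.comp hqT
  have harc1 : Filter.Tendsto (fun x : ℝ => Real.arctan (Real.sqrt ((x - a) / (b - x))))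
      (nhdsWithin b (Set.Iio b)) (nhds (Real.pi / 2)) :=
    (Real.tendsto_arctan_atTop.mono_right nhdsWithin_le_nhds).comp htT
  have harc2 : Filter.Tendsto (fun x : ℝ =>
        Real.arctan (κ * Real.sqrt ((x - a) / (b - x))))
      (nhdsWithin b (Set.Iio b)) (nhds (Real.pi / 2)) :=
    (Real.tendsto_arctan_atTop.mono_right nhdsWithin_le_nhds).comp
      (htT.const_mul_atTop hκ)
  have hfirst : Filter.Tendsto (fun x : ℝ => Real.sqrt ((b - x) * (x - a)) / (ρ - x))
      (nhdsWithin b (Set.Iio b)) (nhds 0) := by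
    have hc : ContinuousAt (fun x : ℝ => Real.sqrt ((b - x) * (x - a)) / (ρ - x)) b :=
      ContinuousAt.div (Real.continuous_sqrt.continuousAt.comp (by fun_prop))
        (by fun_prop) hρb.ne'
    have h2 : Filter.Tendsto _ (nhdsWithin b (Set.Iio b))
        (nhds ((fun x : ℝ => Real.sqrt ((b - x) * (x - a)) / (ρ - x)) b)) :=
      hc.continuousWithinAt (s := Set.Iio b)
    simpa using h2
  have htb : Filter.Tendsto (fun x =>
        Real.sqrt ((b - x) * (x - a)) / (ρ - x)
          - 2 * Real.arctan (Real.sqrt ((x - a) / (b - x)))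
          + K * Real.arctan (κ * Real.sqrt ((x - a) / (b - x))))
      (nhdsWithin b (Set.Iio b))
      (nhds (0 - 2 * (Real.pi / 2) + K * (Real.pi / 2))) :=
    (hfirst.sub (harc1.const_mul 2)).add (harc2.const_mul K)
  have key := intervalIntegral.integral_eq_sub_of_hasDerivAt_of_tendsto hab hderiv hint hta htb
  rw [key]; ring

theorem mp_integral_identity (γ lam ρ a b : ℝ) (hγ : 0 < γ) (hγ1 : γ ≤ 1)
    (hlam : 1 + Real.sqrt γ < lam)
    (hρ : ρ = lam * (1 + γ / (lam - 1)))
    (ha : a = (1 - Real.sqrt γ) ^ 2) (hb : b = (1 + Real.sqrt γ) ^ 2) :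
    ∫ x in a..b,
        x * Real.sqrt ((b - x) * (x - a)) / (2 * Real.pi * γ * x * (ρ - x) ^ 2)
      = 1 / ((lam - 1) ^ 2 - γ) := by
  have hg0 : 0 < Real.sqrt γ := Real.sqrt_pos.2 hγ
  have hg0sq : Real.sqrt γ ^ 2 = γ := Real.sq_sqrt hγ.le
  set g0 := Real.sqrt γ with hg0def
  set u := lam - 1 with hu
  have hug : g0 < u := by rw [hu]; linarith
  have hu0 : 0 < u := hg0.trans hug
  have ha0 : 0 ≤ a := ha ▸ sq_nonneg _
  have hab : a < b := by rw [ha, hb]; nlinarith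
  have huγ : 0 < u ^ 2 - γ := by nlinarith
  have hρa : ρ - a = (u + g0) ^ 2 / u := by
    rw [hρ, ha, ← hg0sq, hu]; have : lam - 1 ≠ 0 := hu0.ne'; field_simp; ring
  have hρb : ρ - b = (u - g0) ^ 2 / u := by
    rw [hρ, hb, ← hg0sq, hu]; have : lam - 1 ≠ 0 := hu0.ne'; field_simp; ring
  have hbρ : b < ρ := by
    have hpos : 0 < (u - g0) ^ 2 / u := div_pos (pow_pos (sub_pos.2 hug) 2) hu0
    linarith [hρb, hpos]
  set κ := (u - g0) / (u + g0) with hκdef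
  set K := 2 * (u ^ 2 + γ) / (u ^ 2 - γ) with hKdef
  have hκpos : 0 < κ := div_pos (by linarith) (by linarith)
  have hκ2 : κ ^ 2 * (ρ - a) = ρ - b := by
    rw [hρa, hρb, hκdef]
    have h1 : u + g0 ≠ 0 := by positivity
    field_simp
    try ring
  have hK : K * (κ * (ρ - a)) = 2 * ρ - a - b := by
    rw [hρa, hκdef, hKdef, hρ, ha, hb, ← hg0sq, hu]
    have h1 : u + g0 ≠ 0 := by positivity
    have h2 : u ^ 2 - g0 ^ 2 ≠ 0 := by rw [hg0sq]; exact huγ.ne'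
    have h3 : (lam - 1) ^ 2 - g0 ^ 2 ≠ 0 := h2
    have h4 : lam - 1 ≠ 0 := hu0.ne'
    have h5 : lam - 1 + g0 ≠ 0 := h1
    field_simp
    try ring
  have key := ftc_key a b ρ K κ ha0 hab hbρ hκpos hκ2 hK
  have step1 : (∫ x in a..b,
        x * Real.sqrt ((b - x) * (x - a)) / (2 * Real.pi * γ * x * (ρ - x) ^ 2))
      = ∫ x in a..b,
        (1 / (2 * Real.pi * γ)) * (Real.sqrt ((b - x) * (x - a)) / (ρ - x) ^ 2) := by
    apply intervalIntegral.integral_congr_ae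
    apply Filter.Eventually.of_forall
    intro x hx
    rw [Set.uIoc_of_le hab.le] at hx
    have hx0 : 0 < x := lt_of_le_of_lt ha0 hx.1
    have hρx : 0 < ρ - x := by linarith [hx.2]
    have hπ : Real.pi ≠ 0 := Real.pi_ne_zero
    field_simp
  rw [step1, intervalIntegral.integral_const_mul, key, hKdef]
  have hπ : 0 < Real.pi := Real.pi_pos
  have h2 : (lam - 1) ^ 2 - γ = u ^ 2 - γ := by rw [hu]
  rw [h2]
  field_simp
  ring
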